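/- Let X be a geodesic Peano continuum that is semi-locally simply connected, and (X̃, d) its path space with the length-infimum metric. Then the endpoint projection p: X̃ → X is a covering map and X̃ is simply connected. -/

import Mathlib

open Metric Set ENNReal NNReal

noncomputable section

/-- Arc length of a path in a pseudo-metric space, valued in `ℝ≥0∞`. -/
def pathLen {X : Type*} [PseudoMetricSpace X] {x y : X} (γ : Path x y) : ℝ≥0∞ :=
  eVariationOn γ Set.univ

/-- A metric space is geodesic if any two points are joined by a path whose
length equals their distance. -/
def IsGeodesicSpace (X : Type*) [MetricSpace X] : Prop :=
  ∀ x y : X, ∃ γ : Path x y, pathLen γ = ENNReal.ofReal (dist x y)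

/-- Semi-local simple connectedness: every point has a neighborhood `U` such
that every loop contained in `U` is null-homotopic in `X`. -/
def SemiLocallySimplyConnected (X : Type*) [TopologicalSpace X] : Prop :=
  ∀ x : X, ∃ U ∈ nhds x, ∀ γ : Path x x, Set.range γ ⊆ U → γ.Homotopic (Path.refl x)

/-- A group is finitely presented. -/
def Group.FinitelyPresented (G : Type*) [Group G] : Prop :=
  ∃ (n : ℕ) (rels : Set (FreeGroup (Fin n))), rels.Finite ∧
    Nonempty (PresentedGroup rels ≃* G)

/-- The space of homotopy-rel-endpoints classes of paths starting at `x₀`. -/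
def PathsFrom {X : Type*} [TopologicalSpace X] (x₀ : X) : Type _ :=
  Σ y : X, Path.Homotopic.Quotient x₀ y

/-- The length-infimum distance on `PathsFrom x₀`, valued in `ℝ≥0∞`:
the infimum of lengths of paths `γ` from `α(1)` to `β(1)` such that
`α ∗ γ` is homotopic rel endpoints to `β`. -/
def dTilde {X : Type*} [MetricSpace X] {x₀ : X} (a b : PathsFrom x₀) : ℝ≥0∞ :=
  ⨅ γ : {γ : Path a.1 b.1 // a.2.trans ⟦γ⟧ = b.2}, pathLen γ.1

/-- The endpoint projection `X̃ → X`. -/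
def endpointProj {X : Type*} [TopologicalSpace X] {x₀ : X} (a : PathsFrom x₀) : X := a.1

/-- The action of a class of a loop `β` at `x₀` on `PathsFrom x₀`, sending `[α]` to `[β ∗ α]`. -/
def loopAct {X : Type*} [TopologicalSpace X] {x₀ : X}
    (g : Path.Homotopic.Quotient x₀ x₀) (a : PathsFrom x₀) : PathsFrom x₀ :=
  ⟨a.1, g.trans a.2⟩

/-- Uniform path connectedness. -/
def UniformlyPathConnected (X : Type*) [MetricSpace X] : Prop :=
  ∃ α : ℝ → ℝ, ∀ x y : X, x ≠ y →
    ∃ γ : Path x y, Metric.diam (Set.range γ) ≤ α (dist x y)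

/-- `π₁(X, x₀)` is uniformly generated: for some `R > 0` it is generated by
classes of loops of diameter at most `R`, conjugated to the basepoint by arbitrary paths. -/
def UniformlyGeneratedPi1 (X : Type*) [MetricSpace X] (x₀ : X) : Prop :=
  ∃ R : ℝ, 0 < R ∧ Subgroup.closure
    {g : FundamentalGroup X x₀ | ∃ (y : X) (p : Path x₀ y) (γ : Path y y),
      Metric.diam (Set.range γ) ≤ R ∧
      g = FundamentalGroup.fromPath (X := TopCat.of X) ⟦(p.trans γ).trans p.symm⟧} = ⊤

/-- A list of points of `X` is an `r`-chain: consecutive points are at distance at most `r`. -/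
def IsChain' {X : Type*} [MetricSpace X] (r : ℝ) : List X → Prop :=
  List.Chain' (fun x y => dist x y ≤ r)

/-- An elementary move at scale `R` between based chains: insertion of one interior
point, with both chains being `R`-chains. -/
def ChainMove {X : Type*} [MetricSpace X] (R : ℝ) (l₁ l₂ : List X) : Prop :=
  ∃ (p q : List X) (x : X), p ≠ [] ∧ q ≠ [] ∧
    l₁ = p ++ q ∧ l₂ = p ++ x :: q ∧ IsChain' R l₁ ∧ IsChain' R l₂

/-- A based `r`-loop is `R`-null-homotopic: it can be reduced to the trivial loop
by elementary moves at scale `R`. -/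
def ChainNull {X : Type*} [MetricSpace X] (R : ℝ) (x₀ : X) (l : List X) : Prop :=
  Relation.ReflTransGen (fun a b => ChainMove R a b ∨ ChainMove R b a) l [x₀, x₀]

/-- Coarse 1-connectedness of a metric space, via chains (edge-paths in Rips
complexes): `X` is `t`-chain connected for some `t > 0`, and every `r`-loop can
be filled at some uniformly larger scale `R`. -/
def CoarselySimplyConnected (X : Type*) [MetricSpace X] : Prop :=
  (∃ t : ℝ, 0 < t ∧ ∀ x y : X, ∃ l : List X, IsChain' t l ∧
      l.head? = some x ∧ l.getLast? = some y) ∧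
  ∀ r : ℝ, 0 < r → ∃ R : ℝ, r ≤ R ∧ ∀ (x₀ : X) (l : List X),
    IsChain' r l → l.head? = some x₀ → l.getLast? = some x₀ → ChainNull R x₀ l

end

noncomputable section

open unitInterval

namespace Stmt9

attribute [local instance] Path.Homotopic.setoid

theorem _root_.Path.Homotopic.comp_lift {X : Type*} [TopologicalSpace X] {x y z : X}
    (P₀ : Path x y) (P₁ : Path y z) :
    (⟦P₀.trans P₁⟧ : Path.Homotopic.Quotient x z) = Path.Homotopic.Quotient.trans ⟦P₀⟧ ⟦P₁⟧ :=
  rfl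

variable {X : Type*} [MetricSpace X]

theorem pathLen_edist_le {x y : X} (γ : Path x y) (s t : I) :
    edist (γ s) (γ t) ≤ pathLen γ :=
  eVariationOn.edist_le γ (Set.mem_univ s) (Set.mem_univ t)

theorem dist_source_lt {x y : X} (γ : Path x y) {r : ℝ} (h : pathLen γ < ENNReal.ofReal r)
    (t : I) : dist x (γ t) < r := by
  have h0 : edist (γ 0) (γ t) < ENNReal.ofReal r := lt_of_le_of_lt (pathLen_edist_le γ 0 t) h
  rw [γ.source] at h0
  rwa [edist_dist, ENNReal.ofReal_lt_ofReal_iff_of_nonneg dist_nonneg] at h0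

theorem pathLen_cast {x y x' y' : X} (γ : Path x y) (hx : x' = x) (hy : y' = y) :
    pathLen (γ.cast hx hy) = pathLen γ := by
  unfold pathLen
  congr 1

/-! ### groupoid algebra helpers -/

open CategoryTheory

/-- view a path class as a morphism in the fundamental groupoid -/
theorem comp_assoc' {w x y z : X} (p : Path.Homotopic.Quotient w x)
    (q : Path.Homotopic.Quotient x y) (r : Path.Homotopic.Quotient y z) :
    (p.trans q).trans r = p.trans (q.trans r) := by
  let p' : FundamentalGroupoid.mk w ⟶ FundamentalGroupoid.mk x := p
  let q' : FundamentalGroupoid.mk x ⟶ FundamentalGroupoid.mk y := q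
  let r' : FundamentalGroupoid.mk y ⟶ FundamentalGroupoid.mk z := r
  exact (Category.assoc p' q' r')

theorem comp_refl' {x y : X} (p : Path.Homotopic.Quotient x y) :
    p.trans ⟦Path.refl y⟧ = p := by
  let p' : FundamentalGroupoid.mk x ⟶ FundamentalGroupoid.mk y := p
  exact (Category.comp_id p')

theorem refl_comp' {x y : X} (p : Path.Homotopic.Quotient x y) :
    (Path.Homotopic.Quotient.trans ⟦Path.refl x⟧ p) = p := by
  let p' : FundamentalGroupoid.mk x ⟶ FundamentalGroupoid.mk y := p
  exact (Category.id_comp p')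

theorem symm_comp' {x y : X} (γ : Path x y) :
    Path.Homotopic.Quotient.trans ⟦γ.symm⟧ ⟦γ⟧ = ⟦Path.refl y⟧ := by
  rw [← Path.Homotopic.comp_lift]
  exact Quotient.sound (Nonempty.intro (Path.Homotopy.reflSymmTrans γ).symm)

theorem comp_symm' {x y : X} (γ : Path x y) :
    Path.Homotopic.Quotient.trans ⟦γ⟧ ⟦γ.symm⟧ = ⟦Path.refl x⟧ := by
  rw [← Path.Homotopic.comp_lift]
  exact Quotient.sound (Nonempty.intro (Path.Homotopy.reflTransSymm γ).symm)

/-- left cancellation -/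
theorem comp_left_cancel {x y z : X} (q : Path.Homotopic.Quotient x y)
    {a b : Path.Homotopic.Quotient y z} (h : q.trans a = q.trans b) : a = b := by
  induction q using Quotient.inductionOn with
  | h γ =>
    have := congrArg (Path.Homotopic.Quotient.trans ⟦γ.symm⟧) h
    rwa [← comp_assoc' ⟦γ.symm⟧ ⟦γ⟧ a, ← comp_assoc' ⟦γ.symm⟧ ⟦γ⟧ b, symm_comp', refl_comp',
      refl_comp'] at this

/-- from `⟦γ.trans δ.symm⟧ = ⟦refl⟧` conclude class equality -/
theorem eq_of_trans_symm_null {x y : X} {γ δ : Path x y}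
    (h : (γ.trans δ.symm).Homotopic (Path.refl x)) : (⟦γ⟧ : Path.Homotopic.Quotient x y) = ⟦δ⟧ := by
  have h' : Path.Homotopic.Quotient.trans (⟦γ⟧ : Path.Homotopic.Quotient x y) ⟦δ.symm⟧
      = ⟦Path.refl x⟧ := by
    rw [← Path.Homotopic.comp_lift]; exact Quotient.sound h
  have := congrArg (fun q => Path.Homotopic.Quotient.trans q (⟦δ⟧ : Path.Homotopic.Quotient x y)) h'
  simp only [comp_assoc' ⟦γ⟧ ⟦δ.symm⟧ ⟦δ⟧, symm_comp', comp_refl' ⟦γ⟧, refl_comp' ⟦δ⟧] at this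
  exact this

/-- conjugation nullity -/
theorem null_of_conj {x y : X} (g : Path x y) (γ : Path y y)
    (h : ((g.trans γ).trans g.symm).Homotopic (Path.refl x)) : γ.Homotopic (Path.refl y) := by
  have h1 : Path.Homotopic.Quotient.trans (Path.Homotopic.Quotient.trans
      (⟦g⟧ : Path.Homotopic.Quotient x y) ⟦γ⟧) ⟦g.symm⟧ = ⟦Path.refl x⟧ := by
    rw [← Path.Homotopic.comp_lift, ← Path.Homotopic.comp_lift]
    exact Quotient.sound h
  have h2 := congrArg (fun q => Path.Homotopic.Quotient.trans q
      (⟦g⟧ : Path.Homotopic.Quotient x y)) h1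
  simp only [comp_assoc' (Path.Homotopic.Quotient.trans ⟦g⟧ ⟦γ⟧) ⟦g.symm⟧ ⟦g⟧, symm_comp',
    comp_refl' (Path.Homotopic.Quotient.trans ⟦g⟧ ⟦γ⟧), refl_comp' ⟦g⟧] at h2
  -- h2 : ⟦g⟧.trans ⟦γ⟧ = ⟦g⟧  (after refl_comp' on RHS)
  have h3 : Path.Homotopic.Quotient.trans (⟦g⟧ : Path.Homotopic.Quotient x y) ⟦γ⟧
      = Path.Homotopic.Quotient.trans ⟦g⟧ ⟦Path.refl y⟧ := by
    exact h2.trans (comp_refl' _).symm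
  exact Quotient.exact (comp_left_cancel _ h3)





/-- choice of geodesics -/
def geo (hg : IsGeodesicSpace X) (x y : X) : Path x y := (hg x y).choose

theorem pathLen_geo (hg : IsGeodesicSpace X) (x y : X) :
    pathLen (geo hg x y) = ENNReal.ofReal (dist x y) := (hg x y).choose_spec

theorem dist_geo_lt (hg : IsGeodesicSpace X) {x y : X} {r : ℝ} (h : dist x y < r) (t : I) :
    dist x (geo hg x y t) < r := by
  apply dist_source_lt (geo hg x y) _ t
  rw [pathLen_geo]
  exact ENNReal.ofReal_lt_ofReal_iff_of_nonneg dist_nonneg |>.mpr h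

/-- Small loops (in the pointwise-close-to-basepoint sense) are null-homotopic. -/
theorem exists_eps [CompactSpace X] [Nonempty X] (hg : IsGeodesicSpace X)
    (hs : SemiLocallySimplyConnected X) :
    ∃ ε : ℝ, 0 < ε ∧ ∀ (y : X) (γ : Path y y),
      (∀ t, dist y (γ t) < ε) → γ.Homotopic (Path.refl y) := by
  -- radius function
  have hrad : ∀ x : X, ∃ r : ℝ, 0 < r ∧
      ∀ γ : Path x x, Set.range γ ⊆ Metric.ball x (3 * r) → γ.Homotopic (Path.refl x) := by
    intro x
    obtain ⟨U, hU, hnull⟩ := hs x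
    obtain ⟨r, hr, hball⟩ := Metric.mem_nhds_iff.mp hU
    exact ⟨r / 3, by linarith, fun γ hγ => hnull γ (fun z hz => hball (by
      have := hγ hz
      simp only [Metric.mem_ball] at this ⊢
      linarith))⟩
  choose rad hrad0 hradnull using hrad
  obtain ⟨s, hscov⟩ := isCompact_univ.elim_finite_subcover
    (fun x : X => Metric.ball x (rad x)) (fun x => Metric.isOpen_ball)
    (fun x _ => Set.mem_iUnion.mpr ⟨x, Metric.mem_ball_self (hrad0 x)⟩)
  have hsne : s.Nonempty := by
    obtain ⟨x⟩ := ‹Nonempty X›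
    obtain ⟨i, hi, _⟩ := Set.mem_iUnion₂.mp (hscov (Set.mem_univ x))
    exact ⟨i, hi⟩
  refine ⟨s.inf' hsne rad, ?_, ?_⟩
  · exact (Finset.lt_inf'_iff hsne).mpr fun i _ => hrad0 i
  · intro y γ hγ
    obtain ⟨x, hx, hyx⟩ := Set.mem_iUnion₂.mp (hscov (Set.mem_univ y))
    have hεx : s.inf' hsne rad ≤ rad x := Finset.inf'_le rad hx
    have hyx' : dist x y < rad x := by
      rw [Metric.mem_ball, dist_comm] at hyx; exact hyx
    set g : Path x y := geo hg x y with hg_def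
    apply null_of_conj g γ
    apply hradnull x
    rw [Path.trans_range, Path.trans_range, Path.symm_range]
    intro z hz
    have hgz : ∀ t : I, g t ∈ Metric.ball x (3 * rad x) := by
      intro t
      have h1 := dist_geo_lt hg hyx' t
      have h2 := hrad0 x
      rw [Metric.mem_ball, dist_comm, hg_def]
      linarith
    rcases hz with (⟨t, ht⟩ | ⟨t, ht⟩) | ⟨t, ht⟩
    · rw [← ht]; exact hgz t
    · rw [← ht]
      have h1 : dist y (γ t) < rad x := lt_of_lt_of_le (hγ t) hεx
      have h2 : dist x (γ t) ≤ dist x y + dist y (γ t) := dist_triangle _ _ _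
      have h3 := hrad0 x
      rw [Metric.mem_ball, dist_comm]
      linarith
    · rw [← ht]; exact hgz t

/-- Two paths that stay close to the common starting point are homotopic. -/
theorem homotopic_of_small {ε : ℝ}
    (hε : ∀ (y : X) (γ : Path y y), (∀ t, dist y (γ t) < ε) → γ.Homotopic (Path.refl y))
    {u v : X} (β β' : Path u v) (h : ∀ t, dist u (β t) < ε) (h' : ∀ t, dist u (β' t) < ε) :
    (⟦β⟧ : Path.Homotopic.Quotient u v) = ⟦β'⟧ := by
  apply eq_of_trans_symm_null
  apply hε
  intro t
  have : (β.trans β'.symm) t ∈ Set.range (β.trans β'.symm) := Set.mem_range_self t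
  rw [Path.trans_range, Path.symm_range] at this
  rcases this with ⟨t', ht'⟩ | ⟨t', ht'⟩ <;> rw [← ht']
  exacts [h t', h' t']

end Stmt9
namespace Stmt9'
open Stmt9 CategoryTheory

attribute [local instance] Path.Homotopic.setoid

variable {X : Type*} [MetricSpace X] {x₀ : X} [MetricSpace (PathsFrom x₀)]
  (hm : ∀ a b : PathsFrom x₀, ENNReal.ofReal (dist a b) = dTilde a b)

theorem dTilde_le {a b : PathsFrom x₀} (γ : Path a.1 b.1) (h : a.2.trans ⟦γ⟧ = b.2) :
    dTilde a b ≤ pathLen γ :=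
  iInf_le (fun γ : {γ : Path a.1 b.1 // a.2.trans ⟦γ⟧ = b.2} => pathLen γ.1) ⟨γ, h⟩

include hm

theorem dist_proj_le (a b : PathsFrom x₀) : dist a.1 b.1 ≤ dist a b := by
  have h1 : ENNReal.ofReal (dist a.1 b.1) ≤ dTilde a b := by
    refine le_iInf fun γ => ?_
    have h := pathLen_edist_le γ.1 0 1
    rw [Path.source, Path.target, edist_dist] at h
    exact h
  rw [← hm] at h1
  exact (ENNReal.ofReal_le_ofReal_iff dist_nonneg).mp h1

theorem dist_mk_le (hg : IsGeodesicSpace X) (a : PathsFrom x₀) (z : X) :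
    dist a (⟨z, a.2.trans ⟦geo hg a.1 z⟧⟩ : PathsFrom x₀) ≤ dist a.1 z := by
  have h1 : dTilde a (⟨z, a.2.trans ⟦geo hg a.1 z⟧⟩ : PathsFrom x₀) ≤ ENNReal.ofReal (dist a.1 z) := by
    have := dTilde_le (a := a) (b := (⟨z, a.2.trans ⟦geo hg a.1 z⟧⟩ : PathsFrom x₀))
      (geo hg a.1 z) rfl
    rwa [pathLen_geo] at this
  have h1 := (hm _ _).trans_le h1
  exact (ENNReal.ofReal_le_ofReal_iff dist_nonneg).mp h1

theorem exists_path_of_dist_lt {a b : PathsFrom x₀} {r : ℝ} (h : dist a b < r) :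
    ∃ γ : Path a.1 b.1, a.2.trans ⟦γ⟧ = b.2 ∧ pathLen γ < ENNReal.ofReal r := by
  have h1 : dTilde a b < ENNReal.ofReal r := by
    rw [← hm]
    exact (ENNReal.ofReal_lt_ofReal_iff_of_nonneg dist_nonneg).mpr h
  obtain ⟨⟨γ, hγ⟩, hlt⟩ := iInf_lt_iff.mp h1
  exact ⟨γ, hγ, hlt⟩

/-- fiber separation: two nearby points with the same projection agree -/
theorem eq_of_proj_eq {ε : ℝ}
    (hε : ∀ (y : X) (γ : Path y y), (∀ t, dist y (γ t) < ε) → γ.Homotopic (Path.refl y))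
    {a b : PathsFrom x₀} (h1 : a.1 = b.1) (h2 : dist a b < ε) : a = b := by
  obtain ⟨γ, hγ, hlen⟩ := exists_path_of_dist_lt hm h2
  obtain ⟨w, qa⟩ := a
  obtain ⟨w', qb⟩ := b
  dsimp at h1
  subst h1
  have hsmall : ∀ t, dist w (γ t) < ε := fun t => dist_source_lt γ hlen t
  have hnull : (⟦γ⟧ : Path.Homotopic.Quotient w w) = ⟦Path.refl w⟧ :=
    Quotient.sound (hε w γ hsmall)
  dsimp only at hγ
  rw [hnull, comp_refl'] at hγ
  rw [hγ]

/-- local isometry around any point -/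
theorem dist_eq_of_close (hg : IsGeodesicSpace X) {ε : ℝ} (hε0 : 0 < ε)
    (hε : ∀ (y : X) (γ : Path y y), (∀ t, dist y (γ t) < ε) → γ.Homotopic (Path.refl y))
    {a b c : PathsFrom x₀} (hb : dist a b < ε / 8) (hc : dist a c < ε / 8) :
    dist b c = dist b.1 c.1 := by
  refine le_antisymm ?_ (dist_proj_le hm b c)
  set u : PathsFrom x₀ := ⟨c.1, b.2.trans ⟦geo hg b.1 c.1⟧⟩ with hu
  have h1 : dist b u ≤ dist b.1 c.1 := dist_mk_le hm hg b c.1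
  have h2 : dist b.1 c.1 ≤ dist b c := dist_proj_le hm b c
  have h3 : dist b c ≤ dist b a + dist a c := dist_triangle _ _ _
  have h4 : dist b a < ε / 8 := by rwa [dist_comm]
  have h5 : dist u c ≤ dist u b + dist b c := dist_triangle _ _ _
  have h6 : dist u b = dist b u := dist_comm _ _
  have huc : u = c := by
    refine eq_of_proj_eq hm hε rfl ?_
    have : dist b.1 c.1 < ε / 4 := by linarith
    linarith
  calc dist b c = dist b u := by rw [huc]
  _ ≤ dist b.1 c.1 := h1
end Stmt9'
namespace Stmt9'
open Stmt9

section Cover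

variable {X : Type*} [MetricSpace X] {x₀ : X} [MetricSpace (PathsFrom x₀)]
  (hm : ∀ a b : PathsFrom x₀, ENNReal.ofReal (dist a b) = dTilde a b)
  (hg : IsGeodesicSpace X) {ε : ℝ} (hε0 : 0 < ε)
  (hε : ∀ (y : X) (γ : Path y y), (∀ t, dist y (γ t) < ε) → γ.Homotopic (Path.refl y))

attribute [local instance] Path.Homotopic.setoid

include hm in
theorem lipschitz_proj : LipschitzWith 1 (endpointProj (x₀ := x₀)) := by
  apply LipschitzWith.of_dist_le_mul
  intro a b
  rw [NNReal.coe_one, one_mul]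
  exact dist_proj_le hm a b

/-- the canonical point of the fiber over `x` obtained by flowing `e` to `x`
along a geodesic -/
def sheet (x : X) (e : PathsFrom x₀) : PathsFrom x₀ := ⟨x, e.2.trans ⟦geo hg e.1 x⟧⟩

theorem sheet_mem (x : X) (e : PathsFrom x₀) :
    sheet hg x e ∈ endpointProj (x₀ := x₀) ⁻¹' {x} := rfl

include hm in
theorem dist_sheet_le (x : X) (e : PathsFrom x₀) : dist e (sheet hg x e) ≤ dist e.1 x :=
  dist_mk_le hm hg e x

/-- the local section over `z` through the fiber point `b` -/
def invf (x : X) (b : {b : PathsFrom x₀ // b ∈ endpointProj (x₀ := x₀) ⁻¹' {x}}) (z : X) :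
    PathsFrom x₀ := ⟨z, b.1.2.trans ⟦(geo hg x z).cast b.2 rfl⟧⟩

include hm in
theorem dist_invf_le (x : X) (b : {b : PathsFrom x₀ // b ∈ endpointProj (x₀ := x₀) ⁻¹' {x}})
    (z : X) : dist b.1 (invf hg x b z) ≤ dist x z := by
  have h1 : dTilde b.1 (invf hg x b z) ≤ ENNReal.ofReal (dist x z) := by
    have := dTilde_le (a := b.1) (b := invf hg x b z) ((geo hg x z).cast b.2 rfl) rfl
    exact this.trans_eq ((pathLen_cast _ _ _).trans (pathLen_geo hg x z))
  have h1 := (hm _ _).trans_le h1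
  exact (ENNReal.ofReal_le_ofReal_iff dist_nonneg).mp h1

include hm hε0 hε in
theorem discrete_fiber (x : X) :
    DiscreteTopology (↥(endpointProj (x₀ := x₀) ⁻¹' {x})) := by
  rw [discreteTopology_iff_isOpen_singleton]
  intro b
  have : {b} = (Subtype.val : ↥(endpointProj (x₀ := x₀) ⁻¹' {x}) → PathsFrom x₀) ⁻¹'
      Metric.ball b.1 ε := by
    ext c
    simp only [Set.mem_singleton_iff, Set.mem_preimage, Metric.mem_ball]
    constructor
    · rintro rfl; simpa using hε0
    · intro hc
      have hproj : (c.1).1 = (b.1).1 := by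
        have h1 : (c.1).1 = x := c.2
        have h2 : (b.1).1 = x := b.2
        rw [h1, h2]
      exact Subtype.ext (eq_of_proj_eq hm hε hproj hc)
  rw [this]
  exact (Metric.isOpen_ball).preimage continuous_subtype_val

include hm hg hε0 hε in
theorem isCoveringMap_proj : IsCoveringMap (endpointProj (x₀ := x₀)) := by
  intro x
  haveI := discrete_fiber hm hε0 hε x
  refine (fun h : ∃ t : Bundle.Trivialization (↥(endpointProj (x₀ := x₀) ⁻¹' {x})) (endpointProj (x₀ := x₀)),
    x ∈ t.baseSet => IsEvenlyCovered.of_trivialization h.choose_spec) ?_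
  have hd8 : 0 < ε / 8 := by linarith
  -- the sheet containing e, as an element of the fiber
  set F := {b : PathsFrom x₀ // b ∈ endpointProj (x₀ := x₀) ⁻¹' {x}}
  have hsheet_eq : ∀ e e' : PathsFrom x₀, e.1 ∈ Metric.ball x (ε/8) →
      e'.1 ∈ Metric.ball x (ε/8) → dist e e' < ε / 2 → sheet hg x e = sheet hg x e' := by
    intro e e' he he' hd
    refine eq_of_proj_eq hm hε rfl ?_
    have h1 := dist_sheet_le hm hg x e
    have h2 := dist_sheet_le hm hg x e'
    rw [Metric.mem_ball] at he he'
    have : dist (sheet hg x e) (sheet hg x e') ≤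
        dist (sheet hg x e) e + dist e e' + dist e' (sheet hg x e') := dist_triangle4 _ _ _ _
    rw [dist_comm (sheet hg x e) e] at this
    linarith
  refine ⟨⟨⟨⟨⟨fun e => (e.1, ⟨sheet hg x e, sheet_mem hg x e⟩),
      fun q => invf hg x q.2 q.1,
      endpointProj (x₀ := x₀) ⁻¹' Metric.ball x (ε/8),
      Metric.ball x (ε/8) ×ˢ Set.univ, ?_, ?_, ?_, ?_⟩, ?_, ?_⟩, ?_, ?_⟩,
      Metric.ball x (ε/8), Metric.isOpen_ball, rfl, rfl, fun e _ => rfl⟩,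
      Metric.mem_ball_self hd8⟩
  · -- map_source
    intro e he
    exact ⟨he, Set.mem_univ _⟩
  · -- map_target
    intro q hq
    exact hq.1
  · -- left_inv
    intro e he
    have he' : e.1 ∈ Metric.ball x (ε/8) := he
    rw [Metric.mem_ball] at he'
    set u := invf hg x ⟨sheet hg x e, sheet_mem hg x e⟩ e.1 with hu
    show u = e
    have h1 : dist e (sheet hg x e) ≤ dist e.1 x := dist_sheet_le hm hg x e
    have h2 : dist (sheet hg x e) u ≤ dist x e.1 :=
      dist_invf_le hm hg x ⟨sheet hg x e, sheet_mem hg x e⟩ e.1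
    refine eq_of_proj_eq hm hε rfl (show dist u e < ε from ?_)
    have h3 : dist u e ≤ dist u (sheet hg x e) + dist (sheet hg x e) e := dist_triangle _ _ _
    rw [dist_comm u (sheet hg x e), dist_comm (sheet hg x e) e] at h3
    rw [dist_comm x e.1] at h2
    have : dist e.1 x < ε / 8 := he'
    linarith
  · -- right_inv
    rintro ⟨z, b⟩ hq
    have hz : z ∈ Metric.ball x (ε/8) := hq.1
    rw [Metric.mem_ball] at hz
    show ((invf hg x b z).1, (⟨sheet hg x (invf hg x b z), sheet_mem hg x _⟩ :
        {b : PathsFrom x₀ // b ∈ endpointProj (x₀ := x₀) ⁻¹' {x}})) = (z, b)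
    refine Prod.ext rfl (Subtype.ext ?_)
    have h1 : dist b.1 (invf hg x b z) ≤ dist x z := dist_invf_le hm hg x b z
    have h2 : dist (invf hg x b z) (sheet hg x (invf hg x b z)) ≤ dist z x :=
      dist_sheet_le hm hg x _
    refine (eq_of_proj_eq hm hε (show ((b : PathsFrom x₀)).1 = x from b.2)
      (show dist (b : PathsFrom x₀) (sheet hg x (invf hg x b z)) < ε from ?_)).symm
    have h3 : dist (b : PathsFrom x₀) (sheet hg x (invf hg x b z)) ≤
        dist (b : PathsFrom x₀) (invf hg x b z) +
          dist (invf hg x b z) (sheet hg x (invf hg x b z)) :=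
      dist_triangle _ _ _
    rw [dist_comm z x] at h2
    have hz' : dist x z < ε / 8 := by rw [dist_comm]; exact hz
    linarith
  rotate_left 2
  · -- open source
    exact ((lipschitz_proj hm).continuous).isOpen_preimage _ Metric.isOpen_ball
  · -- open target
    exact Metric.isOpen_ball.prod isOpen_univ
  · -- continuousOn toFun
    apply ContinuousOn.prodMk
    · exact (lipschitz_proj hm).continuous.continuousOn
    · intro e he
      have hN : Metric.ball e (ε/2) ∈ nhds e := Metric.ball_mem_nhds e (by linarith)
      have heq : ∀ e' ∈ (endpointProj (x₀ := x₀) ⁻¹' Metric.ball x (ε/8)) ∩ Metric.ball e (ε/2),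
          (⟨sheet hg x e', sheet_mem hg x e'⟩ : F) = ⟨sheet hg x e, sheet_mem hg x e⟩ := by
        intro e' ⟨he'1, he'2⟩
        exact Subtype.ext (hsheet_eq e' e he'1 he he'2)
      refine (continuousWithinAt_inter hN).mp ?_
      refine (continuousWithinAt_const (b := (⟨sheet hg x e, sheet_mem hg x e⟩ : F))).congr
        heq (heq e ⟨he, Metric.mem_ball_self (by linarith)⟩)
  · -- continuousOn invFun
    rintro ⟨z, b⟩ hq
    have hz : z ∈ Metric.ball x (ε/8) := hq.1
    have hbopen : IsOpen ({b} : Set F) := by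
      have := discrete_fiber hm hε0 hε x
      exact isOpen_discrete _
    have hN : (Set.univ ×ˢ ({b} : Set F)) ∈ nhds (z, b) :=
      prod_mem_nhds Filter.univ_mem (hbopen.mem_nhds rfl)
    refine (continuousWithinAt_inter hN).mp ?_
    have hlip : LipschitzOnWith 1 (invf hg x b) (Metric.ball x (ε/8)) := by
      apply LipschitzOnWith.of_dist_le_mul
      intro z1 hz1 z2 hz2
      rw [NNReal.coe_one, one_mul]
      have h1 : dist b.1 (invf hg x b z1) ≤ dist x z1 := dist_invf_le hm hg x b z1
      have h2 : dist b.1 (invf hg x b z2) ≤ dist x z2 := dist_invf_le hm hg x b z2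
      rw [Metric.mem_ball] at hz1 hz2
      have hz1' : dist x z1 < ε / 8 := by rw [dist_comm]; exact hz1
      have hz2' : dist x z2 < ε / 8 := by rw [dist_comm]; exact hz2
      have heq := dist_eq_of_close hm hg hε0 hε (a := b.1)
        (b := invf hg x b z1) (c := invf hg x b z2)
        (lt_of_le_of_lt h1 hz1') (lt_of_le_of_lt h2 hz2')
      rw [heq]
      exact le_of_eq rfl
    have hcz : ContinuousWithinAt (invf hg x b) (Metric.ball x (ε/8)) z :=
      hlip.continuousOn z hz
    have hcomp : ContinuousWithinAt ((invf hg x b) ∘ Prod.fst)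
        ((Metric.ball x (ε/8) ×ˢ (Set.univ : Set F)) ∩ (Set.univ ×ˢ ({b} : Set F))) (z, b) := by
      apply ContinuousWithinAt.comp hcz continuousWithinAt_fst
      rintro ⟨z', b'⟩ ⟨hq', _⟩
      exact hq'.1
    refine hcomp.congr ?_ rfl
    rintro ⟨z', b'⟩ ⟨_, _, hb'⟩
    simp only [Set.mem_singleton_iff] at hb'
    rw [hb']
    rfl

end Cover
end Stmt9'
namespace Stmt9'
open Stmt9 CategoryTheory unitInterval

attribute [local instance] Path.Homotopic.setoid

section SegSpaces

/-- the identity path on the unit interval -/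
def pathId : Path (0 : I) (1 : I) := ⟨⟨id, continuous_id⟩, rfl, rfl⟩

@[simp] theorem pathId_apply (t : I) : pathId t = t := rfl

instance : ContractibleSpace I :=
  (convex_Icc (0:ℝ) 1).contractibleSpace ⟨0, Set.mem_Icc.mpr ⟨le_refl 0, zero_le_one⟩⟩

instance : ContractibleSpace (I × I) := by
  have h : ContractibleSpace (↥((Set.Icc (0:ℝ) 1) ×ˢ (Set.Icc (0:ℝ) 1))) :=
    ((convex_Icc (0:ℝ) 1).prod (convex_Icc (0:ℝ) 1)).contractibleSpace
      ⟨(0, 0), Set.mem_prod.mpr ⟨Set.mem_Icc.mpr ⟨le_refl 0, zero_le_one⟩,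
        Set.mem_Icc.mpr ⟨le_refl 0, zero_le_one⟩⟩⟩
  exact (Homeomorph.Set.prod (Set.Icc (0:ℝ) 1) (Set.Icc (0:ℝ) 1)).symm.contractibleSpace

/-- straight segment in the unit interval -/
def segPath (u v : I) : Path u v where
  toFun s := ⟨(1 - (s:ℝ)) * u + s * v, by
    constructor
    · have h1 : (0:ℝ) ≤ 1 - (s:ℝ) := by linarith [unitInterval.le_one s]
      have h2 := unitInterval.nonneg u
      have h3 := unitInterval.nonneg v
      have h4 := unitInterval.nonneg s
      have := mul_nonneg h1 h2
      have := mul_nonneg h4 h3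
      linarith
    · have h1 : (1 - (s:ℝ)) * u ≤ (1 - (s:ℝ)) * 1 := by
        apply mul_le_mul_of_nonneg_left (unitInterval.le_one u)
        linarith [unitInterval.le_one s]
      have h2 : (s:ℝ) * v ≤ (s:ℝ) * 1 := by
        apply mul_le_mul_of_nonneg_left (unitInterval.le_one v) (unitInterval.nonneg s)
      linarith⟩
  continuous_toFun := by
    apply Continuous.subtype_mk
    fun_prop
  source' := by ext; simp
  target' := by ext; simp

theorem segPath_dist (u v : I) (s : I) : dist u (segPath u v s) ≤ dist u v := by
  have h1 : dist u (segPath u v s) = |(u:ℝ) - ((1 - (s:ℝ)) * u + s * v)| := Subtype.dist_eq _ _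
  have h2 : dist u v = |(u:ℝ) - v| := Subtype.dist_eq _ _
  rw [h1, h2]
  have h3 : (u:ℝ) - ((1 - (s:ℝ)) * u + s * v) = (s:ℝ) * ((u:ℝ) - v) := by ring
  rw [h3, abs_mul, abs_of_nonneg (unitInterval.nonneg s)]
  have := unitInterval.le_one s
  nlinarith [abs_nonneg ((u:ℝ) - v)]

theorem seg_I : ∀ t₁ t₂ : I, ∃ c : Path t₁ t₂, ∀ s, dist t₁ (c s) ≤ dist t₁ t₂ :=
  fun t₁ t₂ => ⟨segPath t₁ t₂, segPath_dist t₁ t₂⟩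

theorem seg_II : ∀ t₁ t₂ : I × I, ∃ c : Path t₁ t₂, ∀ s, dist t₁ (c s) ≤ dist t₁ t₂ := by
  intro t₁ t₂
  refine ⟨⟨⟨fun s => (segPath t₁.1 t₂.1 s, segPath t₁.2 t₂.2 s), by fun_prop⟩, ?_, ?_⟩, ?_⟩
  · simp
  · simp
  · intro s
    show dist t₁ ((segPath t₁.1 t₂.1) s, (segPath t₁.2 t₂.2) s) ≤ dist t₁ t₂
    have h1 : dist t₁ (segPath t₁.1 t₂.1 s, segPath t₁.2 t₂.2 s) =
        max (dist t₁.1 (segPath t₁.1 t₂.1 s)) (dist t₁.2 (segPath t₁.2 t₂.2 s)) := Prod.dist_eq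
    rw [h1, Prod.dist_eq]
    exact max_le_max (segPath_dist _ _ _) (segPath_dist _ _ _)

end SegSpaces

/-- constructor for `PathsFrom` -/
def mkP {X : Type*} [TopologicalSpace X] {x₀ : X} (y : X) (q : Path.Homotopic.Quotient x₀ y) :
    PathsFrom x₀ := ⟨y, q⟩

theorem cast_rfl {X : Type*} [TopologicalSpace X] {x y : X} (p : Path x y) :
    p.cast rfl rfl = p := Path.ext (Path.cast_coe p rfl rfl)

theorem homotopic_cast {X : Type*} [TopologicalSpace X] {x y x' y' : X} {p q : Path x y}
    (h : p.Homotopic q) (hx : x' = x) (hy : y' = y) :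
    (p.cast hx hy).Homotopic (q.cast hx hy) := by
  subst hx; subst hy
  rw [cast_rfl, cast_rfl]
  exact h

theorem cast_trans {X : Type*} [TopologicalSpace X] {x y z x' : X} (p : Path x y) (q : Path y z)
    (hx : x' = x) : (p.trans q).cast hx rfl = (p.cast hx rfl).trans q := by
  apply Path.ext
  funext t
  rw [Path.cast_coe]
  show (p.trans q) t = ((p.cast hx rfl).trans q) t
  rw [Path.trans_apply, Path.trans_apply]
  split_ifs with h
  · show p _ = (p.cast hx rfl) _
    rw [Path.cast_coe]
  · rfl

/-- sigma extensionality for `PathsFrom` -/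
theorem mkEq {X : Type*} [TopologicalSpace X] {x₀ : X} {y y' : X} (h : y = y')
    {q : Path.Homotopic.Quotient x₀ y} {q' : Path.Homotopic.Quotient x₀ y'} (hq : HEq q q') :
    (⟨y, q⟩ : PathsFrom x₀) = ⟨y', q'⟩ := by
  subst h
  rw [eq_of_heq hq]

theorem heq_comp {X : Type*} [TopologicalSpace X] {x₀ w y y' : X} (h : y = y')
    (r : Path.Homotopic.Quotient x₀ w) {q : Path.Homotopic.Quotient w y}
    {q' : Path.Homotopic.Quotient w y'} (hq : HEq q q') : HEq (r.trans q) (r.trans q') := by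
  subst h
  rw [eq_of_heq hq]

section Lift

variable {X : Type*} [MetricSpace X] {x₀ : X} [MetricSpace (PathsFrom x₀)]
  (hm : ∀ a b : PathsFrom x₀, ENNReal.ofReal (dist a b) = dTilde a b)
  (hg : IsGeodesicSpace X) {ε : ℝ} (hε0 : 0 < ε)
  (hε : ∀ (y : X) (γ : Path y y), (∀ t, dist y (γ t) < ε) → γ.Homotopic (Path.refl y))
  {T : Type*} [MetricSpace T] [SimplyConnectedSpace T]
  (hseg : ∀ t₁ t₂ : T, ∃ c : Path t₁ t₂, ∀ s, dist t₁ (c s) ≤ dist t₁ t₂)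

/-- the standard lift of `H` through the endpoint projection, starting at `a` -/
def liftF (H : C(T, X)) (t₀ : T) (a : PathsFrom x₀) (ha : a.1 = H t₀) (t : T) : PathsFrom x₀ :=
  ⟨H t, a.2.trans ⟦((PathConnectedSpace.somePath t₀ t).map H.continuous).cast ha rfl⟧⟩

theorem liftF_indep (H : C(T, X)) (t₀ : T) (a : PathsFrom x₀) (ha : a.1 = H t₀) (t : T)
    (c : Path t₀ t) :
    liftF H t₀ a ha t = ⟨H t, a.2.trans ⟦(c.map H.continuous).cast ha rfl⟧⟩ := by
  have h2 : (PathConnectedSpace.somePath t₀ t).Homotopic c :=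
    SimplyConnectedSpace.paths_homotopic _ _
  have h3 := homotopic_cast (h2.map H) ha rfl
  unfold liftF
  congr 1
  exact congrArg _ (Quotient.sound h3)

theorem liftF_start (H : C(T, X)) (t₀ : T) (a : PathsFrom x₀) (ha : a.1 = H t₀) :
    liftF H t₀ a ha t₀ = a := by
  rw [liftF_indep H t₀ a ha t₀ (Path.refl t₀)]
  obtain ⟨a1, a2⟩ := a
  dsimp only at ha
  subst ha
  have h1 : (((Path.refl t₀).map H.continuous).cast rfl rfl) =
      Path.refl (H t₀) := by
    apply Path.ext
    funext s
    rw [Path.cast_coe]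
    rfl
  rw [h1, comp_refl']

theorem liftF_comp (H : C(T, X)) (t₀ : T) (a : PathsFrom x₀) (ha : a.1 = H t₀) (t₁ t : T)
    (c : Path t₁ t) :
    liftF H t₀ a ha t = ⟨H t, (liftF H t₀ a ha t₁).2.trans ⟦c.map H.continuous⟧⟩ := by
  rw [liftF_indep H t₀ a ha t ((PathConnectedSpace.somePath t₀ t₁).trans c)]
  have h1 : (((PathConnectedSpace.somePath t₀ t₁).trans c).map H.continuous).cast ha rfl =
      (((PathConnectedSpace.somePath t₀ t₁).map H.continuous).cast ha rfl).trans
        (c.map H.continuous) := by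
    rw [Path.map_trans]
    exact cast_trans _ _ _
  rw [h1]
  show Sigma.mk (H t) _ = Sigma.mk (H t) _
  congr 1
  rw [Path.Homotopic.comp_lift]; refine (comp_assoc' _ _ _).symm.trans ?_
  rfl

include hm hg hε0 hε hseg in
theorem liftF_cont (H : C(T, X)) (t₀ : T) (a : PathsFrom x₀) (ha : a.1 = H t₀) :
    Continuous (liftF H t₀ a ha) := by
  rw [continuous_iff_continuousAt]
  intro t₁
  rw [Metric.continuousAt_iff]
  intro r hr
  set r' := min (ε/2) (r/2) with hr'
  have hr'0 : 0 < r' := lt_min (by linarith) (by linarith)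
  obtain ⟨η, hη0, hη⟩ := Metric.continuousAt_iff.mp (H.continuous.continuousAt (x := t₁)) r' hr'0
  refine ⟨η, hη0, ?_⟩
  intro t ht
  obtain ⟨c, hc⟩ := hseg t₁ t
  have hHt : dist (H t) (H t₁) < r' := hη ht
  -- all points of the image of c are r'-close to H t₁
  have hsmall : ∀ s, dist (H t₁) ((c.map H.continuous) s) < ε := by
    intro s
    have h1 : dist (c s) t₁ < η := by
      rw [dist_comm]
      calc dist t₁ (c s) ≤ dist t₁ t := hc s
      _ < η := by rwa [dist_comm] at ht
    have := hη h1
    rw [dist_comm] at this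
    calc dist (H t₁) (H (c s)) < r' := this
    _ ≤ ε/2 := min_le_left _ _
    _ < ε := by linarith
  have hgeo : ∀ s, dist (H t₁) (geo hg (H t₁) (H t) s) < ε := by
    intro s
    have h1 : dist (H t₁) (H t) < r' := by rwa [dist_comm] at hHt
    have := dist_geo_lt hg h1 s
    calc dist (H t₁) (geo hg (H t₁) (H t) s) < r' := this
    _ ≤ ε/2 := min_le_left _ _
    _ < ε := by linarith
  have hcls : (⟦c.map H.continuous⟧ : Path.Homotopic.Quotient (H t₁) (H t)) =
      ⟦geo hg (H t₁) (H t)⟧ :=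
    homotopic_of_small hε _ _ hsmall hgeo
  have hkey : liftF H t₀ a ha t =
      ⟨H t, (liftF H t₀ a ha t₁).2.trans ⟦geo hg (liftF H t₀ a ha t₁).1 (H t)⟧⟩ := by
    rw [liftF_comp H t₀ a ha t₁ t c]
    show Sigma.mk (H t) _ = Sigma.mk (H t) _
    congr 1
    exact congrArg _ hcls
  have hdist := dist_mk_le hm hg (liftF H t₀ a ha t₁) (H t)
  rw [← hkey] at hdist
  calc dist (liftF H t₀ a ha t) (liftF H t₀ a ha t₁)
      = dist (liftF H t₀ a ha t₁) (liftF H t₀ a ha t) := dist_comm _ _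
  _ ≤ dist (liftF H t₀ a ha t₁).1 (H t) := hdist
  _ = dist (H t₁) (H t) := rfl
  _ < r' := by rwa [dist_comm] at hHt
  _ ≤ r/2 := min_le_right _ _
  _ < r := by linarith

end Lift
end Stmt9'
namespace Stmt9'
open Stmt9 CategoryTheory unitInterval

attribute [local instance] Path.Homotopic.setoid

section Main

variable {X : Type*} [MetricSpace X] {x₀ : X} [MetricSpace (PathsFrom x₀)]
  (hm : ∀ a b : PathsFrom x₀, ENNReal.ofReal (dist a b) = dTilde a b)
  (hg : IsGeodesicSpace X) {ε : ℝ} (hε0 : 0 < ε)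
  (hε : ∀ (y : X) (γ : Path y y), (∀ t, dist y (γ t) < ε) → γ.Homotopic (Path.refl y))

include hm hg hε0 hε

theorem joined_base (y : X) (q : Path.Homotopic.Quotient x₀ y) :
    Joined (mkP x₀ ⟦Path.refl x₀⟧) (mkP y q) := by
  induction q using Quotient.inductionOn with
  | h α =>
    set H : C(I, X) := α.toContinuousMap with hH
    have ha : (⟨x₀, ⟦Path.refl x₀⟧⟩ : PathsFrom x₀).1 = H 0 := α.source.symm
    have hcont := liftF_cont hm hg hε0 hε seg_I H 0 _ ha
    refine ⟨⟨⟨liftF H 0 _ ha, hcont⟩, liftF_start H 0 _ ha, ?_⟩⟩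
    show liftF H 0 _ ha 1 = (⟨y, ⟦α⟧⟩ : PathsFrom x₀)
    rw [liftF_indep H 0 _ ha 1 pathId]
    refine mkEq (show H 1 = y from α.target) ?_
    have h1 : (⟨x₀, ⟦Path.refl x₀⟧⟩ : PathsFrom x₀).2.trans
        ⟦(pathId.map H.continuous).cast ha rfl⟧ = ⟦(pathId.map H.continuous).cast ha rfl⟧ :=
      refl_comp' _
    rw [h1]
    exact Path.Homotopic.hpath_hext (fun t => by rw [Path.cast_coe]; rfl)

theorem endpoint_class (hcov : IsCoveringMap (endpointProj (x₀ := x₀))) {a b : PathsFrom x₀}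
    (P : Path a b) :
    b = ⟨b.1, a.2.trans ⟦P.map (lipschitz_proj hm).continuous⟧⟩ := by
  set H : C(I, X) := ⟨fun t => (P t).1, ((lipschitz_proj hm).continuous).comp P.continuous⟩
    with hH
  have ha : a.1 = H 0 := by
    show a.1 = (P 0).1
    rw [P.source]
  have hL := liftF_cont hm hg hε0 hε seg_I H 0 a ha
  have huniq : liftF H 0 a ha = ⇑P :=
    hcov.eq_of_comp_eq hL P.continuous (funext fun t => rfl) 0
      ((liftF_start H 0 a ha).trans P.source.symm)
  have h1 : b = liftF H 0 a ha 1 := P.target.symm.trans (by rw [huniq])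
  have hfst : H 1 = b.1 := by
    show (P 1).1 = b.1
    rw [P.target]
  refine h1.trans ?_
  show liftF H 0 a ha 1 = (⟨b.1, a.2.trans ⟦P.map (lipschitz_proj hm).continuous⟧⟩ : PathsFrom x₀)
  rw [liftF_indep H 0 a ha 1 pathId]
  refine mkEq hfst (heq_comp hfst a.2 ?_)
  exact Path.Homotopic.hpath_hext (fun t => by rw [Path.cast_coe]; rfl)

theorem paths_homotopic_tilde (hcov : IsCoveringMap (endpointProj (x₀ := x₀)))
    {a b : PathsFrom x₀} (P Q : Path a b) : P.Homotopic Q := by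
  have hP := endpoint_class hm hg hε0 hε hcov P
  have hQ := endpoint_class hm hg hε0 hε hcov Q
  have h1 : a.2.trans ⟦P.map (lipschitz_proj hm).continuous⟧ =
      a.2.trans ⟦Q.map (lipschitz_proj hm).continuous⟧ :=
    eq_of_heq (Sigma.mk.inj_iff.mp (hP.symm.trans hQ)).2
  have h2 : (⟦P.map (lipschitz_proj hm).continuous⟧ : Path.Homotopic.Quotient a.1 b.1) =
      ⟦Q.map (lipschitz_proj hm).continuous⟧ := comp_left_cancel a.2 h1
  obtain ⟨K⟩ := (Quotient.exact h2 :
    (P.map (lipschitz_proj hm).continuous).Homotopic (Q.map (lipschitz_proj hm).continuous))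
  set H : C(I × I, X) := K.toContinuousMap with hHdef
  have ha : a.1 = H (0, 0) := by
    have h3 : H (0, 0) = (P.map (lipschitz_proj hm).continuous) 0 := K.apply_zero 0
    rw [h3]
    show a.1 = (P 0).1
    rw [P.source]
  set G := liftF H (0, 0) a ha with hGdef
  have hGc : Continuous G := liftF_cont hm hg hε0 hε seg_II H (0, 0) a ha
  have hG00 : G (0, 0) = a := liftF_start H (0, 0) a ha
  have e0 : ∀ s, G (0, s) = P s := by
    have := hcov.eq_of_comp_eq (g₁ := fun s => G (0, s)) (g₂ := ⇑P)
      (hGc.comp (continuous_const.prodMk continuous_id)) P.continuous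
      (funext fun s => K.apply_zero s) 0 (hG00.trans P.source.symm)
    exact fun s => congrFun this s
  have ec0 : ∀ τ, G (τ, 0) = a := by
    have := hcov.eq_of_comp_eq (g₁ := fun τ => G (τ, 0)) (g₂ := fun _ => a)
      (hGc.comp (continuous_id.prodMk continuous_const)) continuous_const
      (funext fun τ => K.source τ) 0 hG00
    exact fun τ => congrFun this τ
  have e1 : ∀ s, G (1, s) = Q s := by
    have := hcov.eq_of_comp_eq (g₁ := fun s => G (1, s)) (g₂ := ⇑Q)
      (hGc.comp (continuous_const.prodMk continuous_id)) Q.continuous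
      (funext fun s => K.apply_one s) 0 ((ec0 1).trans Q.source.symm)
    exact fun s => congrFun this s
  have ec1 : ∀ τ, G (τ, 1) = b := by
    have := hcov.eq_of_comp_eq (g₁ := fun τ => G (τ, 1)) (g₂ := fun _ => b)
      (hGc.comp (continuous_id.prodMk continuous_const)) continuous_const
      (funext fun τ => K.target τ) 0 ((e0 1).trans P.target)
    exact fun τ => congrFun this τ
  refine ⟨⟨⟨⟨G, hGc⟩, e0, e1⟩, ?_⟩⟩
  intro τ s hs
  rcases hs with hs | hs
  · subst hs
    show G (τ, 0) = P 0
    rw [ec0 τ, P.source]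
  · simp only [Set.mem_singleton_iff] at hs
    subst hs
    show G (τ, 1) = P 1
    rw [ec1 τ, P.target]

theorem simplyConnected_tilde (hcov : IsCoveringMap (endpointProj (x₀ := x₀))) :
    SimplyConnectedSpace (PathsFrom x₀) := by
  rw [simply_connected_iff_paths_homotopic]
  constructor
  · exact ⟨⟨mkP x₀ ⟦Path.refl x₀⟧⟩,
      fun a b => (joined_base hm hg hε0 hε a.1 a.2).symm.trans (joined_base hm hg hε0 hε b.1 b.2)⟩
  · intro a b
    constructor
    intro p q
    induction p using Quotient.inductionOn with
    | h P =>
      induction q using Quotient.inductionOn with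
      | h Q => exact Quotient.sound (paths_homotopic_tilde hm hg hε0 hε hcov P Q)

end Main
end Stmt9'


end

/-- the endpoint projection is a covering map and `X̃` is simply
connected. -/
theorem stmt9 {X : Type*} [MetricSpace X] [CompactSpace X] [ConnectedSpace X]
    [LocallyConnectedSpace X] (hg : IsGeodesicSpace X)
    (hs : SemiLocallySimplyConnected X) (x₀ : X)
    (m : MetricSpace (PathsFrom x₀))
    (hm : ∀ a b : PathsFrom x₀,
      ENNReal.ofReal (letI := m; dist a b) = dTilde a b) :
    letI := m
    IsCoveringMap (endpointProj (x₀ := x₀)) ∧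
    SimplyConnectedSpace (PathsFrom x₀) := by
  letI := m
  obtain ⟨ε, hε0, hε⟩ := Stmt9.exists_eps hg hs
  have hcov := Stmt9'.isCoveringMap_proj hm hg hε0 hε
  exact ⟨hcov, Stmt9'.simplyConnected_tilde hm hg hε0 hε hcov⟩
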